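/- Let f be a weakly decreasing, nonconstant, piecewise continuous function on [0,1] with f(1) = 0. Then the global location u(γ, f) converges to ∫₀¹ f(s) ds as γ tends to 0 from the right. -/

import Mathlib

set_option maxHeartbeats 1000000

open MeasureTheory Filter Set
open scoped Topology

lemma expInt (g : ℝ → ℝ) (M γ : ℝ) (hg : IntervalIntegrable g volume 0 1)
    (hb : ∀ s ∈ Set.Icc (0:ℝ) 1, |g s| ≤ M) :
    IntervalIntegrable (fun s => Real.exp (γ * g s)) volume 0 1 := by
  rw [intervalIntegrable_iff_integrableOn_Ioc_of_le zero_le_one]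
  have hm : AEStronglyMeasurable (fun s => Real.exp (γ * g s))
      (volume.restrict (Set.Ioc (0:ℝ) 1)) := by
    have := (hg.1.aestronglyMeasurable.aemeasurable.const_mul γ)
    exact (Real.measurable_exp.comp_aemeasurable this).aestronglyMeasurable
  refine Integrable.mono' (integrable_const (Real.exp (|γ| * M))) hm ?_
  filter_upwards [ae_restrict_mem measurableSet_Ioc] with s hs
  have hsI : s ∈ Set.Icc (0:ℝ) 1 := Set.Ioc_subset_Icc_self hs
  have h1 : γ * g s ≤ |γ| * M := by
    calc γ * g s ≤ |γ * g s| := le_abs_self _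
    _ = |γ| * |g s| := abs_mul _ _
    _ ≤ |γ| * M := by
        have := hb s hsI
        exact mul_le_mul_of_nonneg_left this (abs_nonneg _)
  simpa [Real.norm_eq_abs, abs_of_pos (Real.exp_pos _)] using Real.exp_le_exp.2 h1

lemma Fpos (g : ℝ → ℝ) (M γ : ℝ) (hg : IntervalIntegrable g volume 0 1)
    (hb : ∀ s ∈ Set.Icc (0:ℝ) 1, |g s| ≤ M) :
    0 < ∫ s in (0:ℝ)..1, Real.exp (γ * g s) :=
  intervalIntegral.intervalIntegral_pos_of_pos_on (expInt g M γ hg hb)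
    (fun x _ => Real.exp_pos _) zero_lt_one

lemma key (g : ℝ → ℝ) (M : ℝ) (hM : 0 ≤ M) (hg : IntervalIntegrable g volume 0 1)
    (hb : ∀ s ∈ Set.Icc (0:ℝ) 1, |g s| ≤ M) :
    Tendsto (fun γ => Real.log (∫ s in (0:ℝ)..1, Real.exp (γ * g s)) / γ)
      (𝓝[>] (0:ℝ)) (𝓝 (∫ s in (0:ℝ)..1, g s)) := by
  set F : ℝ → ℝ := fun γ => ∫ s in (0:ℝ)..1, Real.exp (γ * g s) with hF
  set L : ℝ := ∫ s in (0:ℝ)..1, g s with hL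
  have hFpos : ∀ γ, 0 < F γ := fun γ => Fpos g M γ hg hb
  -- Step A : (F γ - 1)/γ → L
  have hq : Tendsto (fun γ => (F γ - 1) / γ) (𝓝[>] (0:ℝ)) (𝓝 L) := by
    have hDCT : Tendsto (fun γ => ∫ s in Set.Ioc (0:ℝ) 1, (Real.exp (γ * g s) - 1) / γ)
        (𝓝[>] (0:ℝ)) (𝓝 (∫ s in Set.Ioc (0:ℝ) 1, g s)) := by
      refine tendsto_integral_filter_of_dominated_convergence (fun _ => 2 * M) ?_ ?_ ?_ ?_
      · filter_upwards with γ
        have := (expInt g M γ hg hb).1.aestronglyMeasurable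
        exact ((this.aemeasurable.sub aemeasurable_const).div aemeasurable_const).aestronglyMeasurable
      · have hmem : Set.Ioo (0:ℝ) (1/(M+1)) ∈ 𝓝[>] (0:ℝ) := by
          apply Ioo_mem_nhdsGT_of_mem
          constructor
          · exact le_refl 0
          · positivity
        filter_upwards [hmem] with γ hγ
        filter_upwards [ae_restrict_mem measurableSet_Ioc] with s hs
        have hsI : s ∈ Set.Icc (0:ℝ) 1 := Set.Ioc_subset_Icc_self hs
        have hγ0 : 0 < γ := hγ.1
        have habs : |γ * g s| ≤ 1 := by
          rw [abs_mul, abs_of_pos hγ0]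
          calc γ * |g s| ≤ (1/(M+1)) * (M+1) := by
                apply mul_le_mul hγ.2.le ((hb s hsI).trans (by linarith)) (abs_nonneg _)
                positivity
          _ = 1 := by field_simp
        have h2 : |Real.exp (γ * g s) - 1| ≤ 2 * |γ * g s| := Real.abs_exp_sub_one_le habs
        have h3 : |Real.exp (γ * g s) - 1| ≤ 2 * (γ * M) := by
          refine h2.trans ?_
          rw [abs_mul, abs_of_pos hγ0]
          have := hb s hsI
          nlinarith [abs_nonneg (g s)]
        rw [Real.norm_eq_abs, abs_div, abs_of_pos hγ0, div_le_iff₀ hγ0]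
        nlinarith
      · exact integrableOn_const (by simp) enorm_ne_top
      · filter_upwards [ae_restrict_mem measurableSet_Ioc] with s _
        have hd : HasDerivAt (fun γ : ℝ => Real.exp (γ * g s)) (g s) 0 := by
          have h1 : HasDerivAt (fun γ : ℝ => γ * g s) (g s) 0 := hasDerivAt_mul_const _
          simpa using h1.exp
        -- slope at 0 within punctured nbhd
        have h2 : Tendsto (fun γ : ℝ => (Real.exp (γ * g s) - Real.exp (0 * g s)) / γ)
            (𝓝[≠] (0:ℝ)) (𝓝 (g s)) := by
          have := (hasDerivAt_iff_tendsto_slope.1 hd)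
          refine this.congr fun γ => ?_
          simp [slope_def_field, div_eq_mul_inv, mul_comm]
        have h3 := h2.mono_left (nhdsWithin_mono _ (s := Set.Ioi (0:ℝ)) (fun x hx => ne_of_gt hx))
        simpa using h3
    have heq : ∀ᶠ γ in 𝓝[>] (0:ℝ),
        (∫ s in Set.Ioc (0:ℝ) 1, (Real.exp (γ * g s) - 1) / γ) = (F γ - 1) / γ := by
      filter_upwards [self_mem_nhdsWithin] with γ (hγ : 0 < γ)
      rw [← intervalIntegral.integral_of_le zero_le_one]
      rw [intervalIntegral.integral_div]
      congr 1
      rw [intervalIntegral.integral_sub (expInt g M γ hg hb) intervalIntegrable_const]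
      simp [hF]
    have hLeq : L = ∫ s in Set.Ioc (0:ℝ) 1, g s := intervalIntegral.integral_of_le zero_le_one
    rw [hLeq]
    exact hDCT.congr' heq
  -- Step B : F → 1
  have hF1 : Tendsto F (𝓝[>] (0:ℝ)) (𝓝 1) := by
    have h0 : Tendsto (fun γ : ℝ => ((F γ - 1)/γ) * γ + 1) (𝓝[>] (0:ℝ)) (𝓝 1) := by
      have hid : Tendsto (fun γ : ℝ => γ) (𝓝[>] (0:ℝ)) (𝓝 0) :=
        tendsto_id.mono_left nhdsWithin_le_nhds
      have := (hq.mul hid).add (tendsto_const_nhds (x := (1:ℝ)))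
      simpa using this
    refine h0.congr' ?_
    filter_upwards [self_mem_nhdsWithin] with γ (hγ : 0 < γ)
    field_simp
    ring
  -- Step C : squeeze
  have hlow : Tendsto (fun γ => ((F γ - 1)/γ) * (F γ)⁻¹) (𝓝[>] (0:ℝ)) (𝓝 L) := by
    have := hq.mul (hF1.inv₀ one_ne_zero)
    simpa using this
  refine tendsto_of_tendsto_of_tendsto_of_le_of_le' hlow hq ?_ ?_
  · filter_upwards [self_mem_nhdsWithin] with γ (hγ : 0 < γ)
    have hp := hFpos γ
    have h1 : 1 - (F γ)⁻¹ ≤ Real.log (F γ) := by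
      have := Real.log_le_sub_one_of_pos (inv_pos.2 hp)
      rw [Real.log_inv] at this
      linarith
    rw [div_eq_mul_inv, div_eq_mul_inv, mul_right_comm]
    apply mul_le_mul_of_nonneg_right _ (le_of_lt (inv_pos.2 hγ))
    have : (F γ - 1) * (F γ)⁻¹ = 1 - (F γ)⁻¹ := by field_simp
    rw [this]; exact h1
  · filter_upwards [self_mem_nhdsWithin] with γ (hγ : 0 < γ)
    have h1 : Real.log (F γ) ≤ F γ - 1 := Real.log_le_sub_one_of_pos (hFpos γ)
    exact div_le_div_of_nonneg_right h1 hγ.le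

/-- Piecewise continuity on `[0,1]`: continuity within `[0,1]` away from a finite set. -/
def PiecewiseContinuousOn (f : ℝ → ℝ) : Prop :=
  ∃ S : Finset ℝ, ∀ x ∈ Set.Icc (0:ℝ) 1, x ∉ S → ContinuousWithinAt f (Set.Icc (0:ℝ) 1) x

/-- The global location `u(γ, f)`. -/
noncomputable def uLoc (γ : ℝ) (f : ℝ → ℝ) : ℝ :=
  (1/γ) * Real.log ((∫ s in (0:ℝ)..1, Real.exp (γ * s)) /
    (∫ s in (0:ℝ)..1, Real.exp (γ * (s - f s))))

/-- The limiting variance `σ²(γ, f)`. -/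
noncomputable def sigmaSq (γ : ℝ) (f : ℝ → ℝ) : ℝ :=
  (1/(Real.exp γ - 1)^2) *
    ∫ s in (0:ℝ)..1,
      (Real.exp (2*γ*(uLoc γ f + s - f s)) - Real.exp (2*γ*s))

/-- the global location `u(γ,f)` converges to `∫₀¹ f(s) ds` as `γ → 0⁺`. -/
theorem uLoc_tendsto_of_gamma_to_zero (f : ℝ → ℝ)
    (hdec : AntitoneOn f (Set.Icc (0:ℝ) 1))
    (hpc : PiecewiseContinuousOn f)
    (hnc : ∃ x ∈ Set.Icc (0:ℝ) 1, ∃ y ∈ Set.Icc (0:ℝ) 1, f x ≠ f y)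
    (hf1 : f 1 = 0) :
    Tendsto (fun γ : ℝ => uLoc γ f) (𝓝[>] 0)
      (𝓝 (∫ s in (0:ℝ)..1, f s)) := by
  have h01 : (0:ℝ) ∈ Set.Icc (0:ℝ) 1 := by norm_num
  have h11 : (1:ℝ) ∈ Set.Icc (0:ℝ) 1 := by norm_num
  have hf0 : 0 ≤ f 0 := by
    have := hdec h01 h11 zero_le_one
    rw [hf1] at this; exact this
  have hfb : ∀ s ∈ Set.Icc (0:ℝ) 1, 0 ≤ f s ∧ f s ≤ f 0 := by
    intro s hs
    constructor
    · have := hdec hs h11 hs.2; rw [hf1] at this; exact this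
    · exact hdec h01 hs hs.1
  -- integrability of f
  have hfint : IntervalIntegrable f volume 0 1 := by
    apply AntitoneOn.intervalIntegrable
    rwa [Set.uIcc_of_le zero_le_one]
  -- g₁ = id
  have hg1 : IntervalIntegrable (fun s : ℝ => s) volume 0 1 := (continuous_id.intervalIntegrable 0 1)
  have hb1 : ∀ s ∈ Set.Icc (0:ℝ) 1, |(fun s : ℝ => s) s| ≤ 1 := by
    intro s hs; rw [abs_of_nonneg hs.1]; exact hs.2
  -- g₂ = s - f s
  have hg2 : IntervalIntegrable (fun s : ℝ => s - f s) volume 0 1 := hg1.sub hfint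
  have hb2 : ∀ s ∈ Set.Icc (0:ℝ) 1, |s - f s| ≤ 1 + f 0 := by
    intro s hs
    have h := hfb s hs
    rw [abs_sub_comm, abs_le]
    constructor <;> [nlinarith [hs.1, hs.2]; nlinarith [hs.1, hs.2]]
  have k1 := key (fun s : ℝ => s) 1 zero_le_one hg1 hb1
  have k2 := key (fun s : ℝ => s - f s) (1 + f 0) (by linarith) hg2 hb2
  have hsub := k1.sub k2
  have hval : (∫ s in (0:ℝ)..1, (fun s : ℝ => s) s) - (∫ s in (0:ℝ)..1, s - f s)
      = ∫ s in (0:ℝ)..1, f s := by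
    rw [intervalIntegral.integral_sub hg1 hfint]; ring
  rw [hval] at hsub
  refine hsub.congr' ?_
  filter_upwards [self_mem_nhdsWithin] with γ (hγ : 0 < γ)
  have hA := Fpos (fun s : ℝ => s) 1 γ hg1 hb1
  have hB := Fpos (fun s : ℝ => s - f s) (1 + f 0) γ hg2 hb2
  simp only [uLoc]
  rw [Real.log_div (ne_of_gt hA) (ne_of_gt hB)]
  field_simp
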